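/- Energy equality for the AC-ROM scheme: If (u^{n+1}, p^{n+1}) in finite-dimensional spaces X_R × Q_M satisfy, for all φ ∈ X_R and ψ ∈ Q_M, ((u^{n+1}−u^n)/Δt, φ) + b*(u^n, u^{n+1}, φ) + ν(∇u^{n+1}, ∇φ) − (p^{n+1}, ∇·φ) = (f^{n+1}, φ) and ε((p^{n+1}−p^n)/Δt, ψ) + (∇·u^{n+1}, ψ) = 0, then ‖u^{N+1}‖² + ε‖p^{N+1}‖² + Σ_{n=0}^N (‖u^{n+1}−u^n‖² + ε‖p^{n+1}−p^n‖²) + 2Δt ν Σ_{n=0}^N ‖∇u^{n+1}‖² = ‖u^0‖² + ε‖p^0‖² + 2Δt Σ_{n=0}^N (f^{n+1}, u^{n+1}). -/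
import Mathlib

open RealInnerProductSpace

lemma polar_aux {X : Type*} [NormedAddCommGroup X] [InnerProductSpace ℝ X]
    (a b : X) : 2 * ⟪a - b, a⟫ = ‖a‖ ^ 2 - ‖b‖ ^ 2 + ‖a - b‖ ^ 2 := by
  have h1 : ‖a - b‖ ^ 2 = ‖a‖ ^ 2 - 2 * ⟪a, b⟫ + ‖b‖ ^ 2 := norm_sub_sq_real a b
  have h2 : ⟪a - b, a⟫ = ⟪a, a⟫ - ⟪b, a⟫ := inner_sub_left a b a
  have h3 : ⟪a, a⟫ = ‖a‖ ^ 2 := real_inner_self_eq_norm_sq a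
  have h4 : ⟪b, a⟫ = ⟪a, b⟫ := real_inner_comm a b
  nlinarith [h1, h2, h3, h4]

/-- Energy equality for the AC-ROM scheme. `X` abstracts the velocity space with
`L²` inner product, `grad` and `dvg` the gradient and divergence operators, `Q`
the pressure `L²` space, and `bstar` the skew-symmetric trilinear form
(`bstar w v v = 0`). If `(u^{n+1}, p^{n+1}) ∈ X_R × Q_M` satisfy the AC-ROM
scheme for all test functions in `X_R × Q_M`, then the discrete energy equality
holds. -/
theorem ac_rom_energy_equality
    {X Y Q : Type*} [NormedAddCommGroup X] [InnerProductSpace ℝ X]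
    [NormedAddCommGroup Y] [InnerProductSpace ℝ Y]
    [NormedAddCommGroup Q] [InnerProductSpace ℝ Q]
    (grad : X →ₗ[ℝ] Y) (dvg : X →ₗ[ℝ] Q)
    (bstar : X → X → X → ℝ) (hskew : ∀ w v, bstar w v v = 0)
    (XR : Submodule ℝ X) (QM : Submodule ℝ Q)
    (ν ε Δt : ℝ) (hν : 0 < ν) (hε : 0 < ε) (hΔt : 0 < Δt)
    (f u : ℕ → X) (p : ℕ → Q)
    (hu : ∀ n, u n ∈ XR) (hp : ∀ n, p n ∈ QM)
    (hscheme1 : ∀ n, ∀ φ ∈ XR,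
      ⟪u (n + 1) - u n, φ⟫ / Δt + bstar (u n) (u (n + 1)) φ
          + ν * ⟪grad (u (n + 1)), grad φ⟫ - ⟪p (n + 1), dvg φ⟫
        = ⟪f (n + 1), φ⟫)
    (hscheme2 : ∀ n, ∀ ψ ∈ QM,
      ε * (⟪p (n + 1) - p n, ψ⟫ / Δt) + ⟪dvg (u (n + 1)), ψ⟫ = 0)
    (N : ℕ) :
    ‖u (N + 1)‖ ^ 2 + ε * ‖p (N + 1)‖ ^ 2
        + ∑ n ∈ Finset.range (N + 1),
            (‖u (n + 1) - u n‖ ^ 2 + ε * ‖p (n + 1) - p n‖ ^ 2)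
        + 2 * Δt * ν * ∑ n ∈ Finset.range (N + 1), ‖grad (u (n + 1))‖ ^ 2
      = ‖u 0‖ ^ 2 + ε * ‖p 0‖ ^ 2
        + 2 * Δt * ∑ n ∈ Finset.range (N + 1), ⟪f (n + 1), u (n + 1)⟫ := by
  have key : ∀ n : ℕ,
      ‖u (n + 1)‖ ^ 2 + ε * ‖p (n + 1)‖ ^ 2
        + (‖u (n + 1) - u n‖ ^ 2 + ε * ‖p (n + 1) - p n‖ ^ 2)
        + 2 * Δt * ν * ‖grad (u (n + 1))‖ ^ 2
      = ‖u n‖ ^ 2 + ε * ‖p n‖ ^ 2 + 2 * Δt * ⟪f (n + 1), u (n + 1)⟫ := by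
    intro n
    have h1 := hscheme1 n (u (n + 1)) (hu (n + 1))
    have h2 := hscheme2 n (p (n + 1)) (hp (n + 1))
    rw [hskew] at h1
    have hpu : 2 * ⟪u (n + 1) - u n, u (n + 1)⟫
        = ‖u (n + 1)‖ ^ 2 - ‖u n‖ ^ 2 + ‖u (n + 1) - u n‖ ^ 2 := polar_aux _ _
    have hpp : 2 * ⟪p (n + 1) - p n, p (n + 1)⟫
        = ‖p (n + 1)‖ ^ 2 - ‖p n‖ ^ 2 + ‖p (n + 1) - p n‖ ^ 2 := polar_aux _ _
    have hg : ⟪grad (u (n + 1)), grad (u (n + 1))⟫ = ‖grad (u (n + 1))‖ ^ 2 :=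
      real_inner_self_eq_norm_sq _
    have hsym : ⟪p (n + 1), dvg (u (n + 1))⟫ = ⟪dvg (u (n + 1)), p (n + 1)⟫ :=
      real_inner_comm _ _
    rw [hg, hsym] at h1
    have hΔt' : Δt ≠ 0 := ne_of_gt hΔt
    field_simp at h1 h2
    linear_combination 2 * h1 + 2 * h2 - hpu - ε * hpp
  induction N with
  | zero =>
    rw [Finset.sum_range_one, Finset.sum_range_one, Finset.sum_range_one]
    have := key 0
    linarith
  | succ N ih =>
    rw [Finset.sum_range_succ (n := N + 1), Finset.sum_range_succ (n := N + 1),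
      Finset.sum_range_succ (n := N + 1)]
    have := key (N + 1)
    linarith
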